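/- Let b_1, …, b_ℓ be bounded operators on a Hilbert space 𝓗, let i ↦ i^* be an involution on {1,…,ℓ}, and let B and B̃ be the associated non-backtracking operators on 𝓗 ⊗ ℂ^ℓ. Let λ ∈ ℂ be such that λ² ∉ σ(b_{i^*} b_i) for every i ∈ {1,…,ℓ}, and define the bounded operator A^{(λ)} = b_0(λ) + Σ_{i=1}^ℓ b_i(λ) on 𝓗, where b_i(λ) = λ b_i (λ² − b_{i^*} b_i)^{−1} and b_0(λ) = −1 − Σ_{i=1}^ℓ b_i (λ² − b_{i^*} b_i)^{−1} b_{i^*}. Then λ ∈ σ(B) if and only if 0 ∈ σ(A^{(λ)}), and likewise λ ∈ σ(B̃) if and only if 0 ∈ σ(A^{(λ)}). -/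

import Mathlib

open scoped ENNReal

noncomputable section

namespace SAF

variable {H : Type*} [NormedAddCommGroup H] [InnerProductSpace ℂ H]

/-- The canonical identification `H^ℓ → ⊕²_{i ∈ [ℓ]} H` as a continuous linear map. -/
def pilpOfPi (l : ℕ) (H : Type*) [NormedAddCommGroup H] [NormedSpace ℂ H] :
    ((i : Fin l) → H) →L[ℂ] PiLp 2 (fun _ : Fin l => H) :=
  (PiLp.continuousLinearEquiv 2 ℂ (fun _ : Fin l => H)).symm.toContinuousLinearMap

/-- The coordinate projection `⊕²_{i ∈ [ℓ]} H → H` as a continuous linear map. -/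
def pilpProj (l : ℕ) (H : Type*) [NormedAddCommGroup H] [NormedSpace ℂ H] (j : Fin l) :
    PiLp 2 (fun _ : Fin l => H) →L[ℂ] H :=
  (ContinuousLinearMap.proj j).comp
    (PiLp.continuousLinearEquiv 2 ℂ (fun _ : Fin l => H)).toContinuousLinearMap

/-- The (right) non-backtracking operator `B = ∑_{j ≠ i*} b_j ⊗ E_{ij}` on `H ⊗ ℂ^ℓ`,
realized on the Hilbert direct sum `⊕²_{i ∈ [ℓ]} H`: `(B v) i = ∑_{j ≠ i*} b_j (v j)`. -/
def nbOp {l : ℕ} (H : Type*) [NormedAddCommGroup H] [NormedSpace ℂ H]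
    (b : Fin l → H →L[ℂ] H) (inv : Fin l → Fin l) :
    PiLp 2 (fun _ : Fin l => H) →L[ℂ] PiLp 2 (fun _ : Fin l => H) :=
  (pilpOfPi l H).comp (ContinuousLinearMap.pi fun i =>
    ∑ j : Fin l, if j = inv i then 0 else (b j).comp (pilpProj l H j))

/-- The left non-backtracking operator `B̃ = ∑_{j ≠ i*} b_i ⊗ E_{ij}` on `H ⊗ ℂ^ℓ`:
`(B̃ v) i = ∑_{j ≠ i*} b_i (v j)`. -/
def nbOpL {l : ℕ} (H : Type*) [NormedAddCommGroup H] [NormedSpace ℂ H]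
    (b : Fin l → H →L[ℂ] H) (inv : Fin l → Fin l) :
    PiLp 2 (fun _ : Fin l => H) →L[ℂ] PiLp 2 (fun _ : Fin l => H) :=
  (pilpOfPi l H).comp (ContinuousLinearMap.pi fun i =>
    ∑ j : Fin l, if j = inv i then 0 else (b i).comp (pilpProj l H j))

/-- `b_i(λ) = λ b_i (λ² − b_{i*} b_i)⁻¹`. -/
def bLam {l : ℕ} [CompleteSpace H] (b : Fin l → H →L[ℂ] H) (inv : Fin l → Fin l)
    (lam : ℂ) (i : Fin l) : H →L[ℂ] H :=
  lam • (b i * Ring.inverse (lam ^ 2 • (1 : H →L[ℂ] H) - b (inv i) * b i))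

/-- `b_0(λ) = −1 − ∑_i b_i (λ² − b_{i*} b_i)⁻¹ b_{i*}`. -/
def bZeroLam {l : ℕ} [CompleteSpace H] (b : Fin l → H →L[ℂ] H) (inv : Fin l → Fin l)
    (lam : ℂ) : H →L[ℂ] H :=
  -1 - ∑ i : Fin l,
    b i * Ring.inverse (lam ^ 2 • (1 : H →L[ℂ] H) - b (inv i) * b i) * b (inv i)

/-- `A^{(λ)} = b_0(λ) + ∑_i b_i(λ)`. -/
def aLam {l : ℕ} [CompleteSpace H] (b : Fin l → H →L[ℂ] H) (inv : Fin l → Fin l)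
    (lam : ℂ) : H →L[ℂ] H :=
  bZeroLam b inv lam + ∑ i : Fin l, bLam b inv lam i

-- ### auxiliary development
section Aux
variable [CompleteSpace H] {l : ℕ} (b : Fin l → H →L[ℂ] H) (inv : Fin l → Fin l) (lam : ℂ)

/-- `c i = (λ² − b_{i*} b_i)⁻¹`. -/
def cop (i : Fin l) : H →L[ℂ] H :=
  Ring.inverse (lam ^ 2 • (1 : H →L[ℂ] H) - b (inv i) * b i)

lemma sum_ite_ne {M : Type*} [AddCommGroup M] (k : Fin l) (f : Fin l → M) :
    ∑ j, (if j = k then 0 else f j) = (∑ j, f j) - f k := by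
  rw [eq_sub_iff_add_eq]
  have : f k = ∑ j : Fin l, if j = k then f j else 0 := by
    rw [Finset.sum_ite_eq' Finset.univ k f]; simp
  rw [this, ← Finset.sum_add_distrib]
  exact Finset.sum_congr rfl fun j _ => by split <;> simp

lemma nbOp_apply (v : PiLp 2 (fun _ : Fin l => H)) (i : Fin l) :
    nbOp H b inv v i = (∑ j, b j (v j)) - b (inv i) (v (inv i)) := by
  show (∑ j : Fin l, if j = inv i then (0 : _ →L[ℂ] _) else (b j).comp (pilpProj l H j)) v = _
  rw [ContinuousLinearMap.sum_apply, ← sum_ite_ne (inv i) (fun j => b j (v j))]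
  exact Finset.sum_congr rfl fun j _ => by split <;> simp [pilpProj]

lemma nbOpL_apply (v : PiLp 2 (fun _ : Fin l => H)) (i : Fin l) :
    nbOpL H b inv v i = (∑ j, b i (v j)) - b i (v (inv i)) := by
  show (∑ j : Fin l, if j = inv i then (0 : _ →L[ℂ] _) else (b i).comp (pilpProj l H j)) v = _
  rw [ContinuousLinearMap.sum_apply, ← sum_ite_ne (inv i) (fun j => b i (v j))]
  exact Finset.sum_congr rfl fun j _ => by split <;> simp [pilpProj]


lemma cop_cancel (hc : ∀ i, IsUnit (lam ^ 2 • (1 : H →L[ℂ] H) - b (inv i) * b i))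
    (i : Fin l) (x : H) :
    cop b inv lam i (lam ^ 2 • x - b (inv i) (b i x)) = x := by
  have h := Ring.inverse_mul_cancel _ (hc i)
  have h2 := congrArg (fun (T : H →L[ℂ] H) => T x) h
  simpa [cop, ContinuousLinearMap.mul_apply, ContinuousLinearMap.sub_apply,
    ContinuousLinearMap.smul_apply, ContinuousLinearMap.one_apply] using h2

lemma swap_op (hc : ∀ i, IsUnit (lam ^ 2 • (1 : H →L[ℂ] H) - b (inv i) * b i))
    (hinv : ∀ i, inv (inv i) = i) (i : Fin l) :
    b i * cop b inv lam i = cop b inv lam (inv i) * b i := by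
  simp only [cop]
  set x1 := lam ^ 2 • (1 : H →L[ℂ] H) - b (inv i) * b i with hx1
  set y1 := lam ^ 2 • (1 : H →L[ℂ] H) - b (inv (inv i)) * b (inv i) with hy1
  have key : b i * x1 = y1 * b i := by
    rw [hx1, hy1, hinv]
    simp [mul_sub, sub_mul, mul_smul_comm, smul_mul_assoc, mul_assoc]
  have h1 : Ring.inverse y1 * y1 = 1 := Ring.inverse_mul_cancel _ (hc (inv i))
  have h2 : x1 * Ring.inverse x1 = 1 := Ring.mul_inverse_cancel _ (hc i)
  calc b i * Ring.inverse x1 = 1 * (b i * Ring.inverse x1) := (one_mul _).symm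
    _ = Ring.inverse y1 * y1 * (b i * Ring.inverse x1) := by rw [h1]
    _ = Ring.inverse y1 * ((y1 * b i) * Ring.inverse x1) := by
        rw [mul_assoc, ← mul_assoc y1]
    _ = Ring.inverse y1 * ((b i * x1) * Ring.inverse x1) := by rw [← key]
    _ = Ring.inverse y1 * (b i * (x1 * Ring.inverse x1)) := by rw [mul_assoc]
    _ = Ring.inverse y1 * b i := by rw [h2, mul_one]

lemma swap_apply (hc : ∀ i, IsUnit (lam ^ 2 • (1 : H →L[ℂ] H) - b (inv i) * b i))
    (hinv : ∀ i, inv (inv i) = i) (i : Fin l) (x : H) :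
    b i (cop b inv lam i x) = cop b inv lam (inv i) (b i x) := by
  have := congrArg (fun (T : H →L[ℂ] H) => T x) (swap_op b inv lam hc hinv i)
  simpa [ContinuousLinearMap.mul_apply] using this

lemma sumA : ∑ i, (b i * cop b inv lam i) * (lam • (1 : H →L[ℂ] H) - b (inv i))
    = aLam b inv lam + 1 := by
  simp only [cop, aLam, bZeroLam, bLam, mul_sub, mul_one, mul_smul_comm]
  rw [Finset.sum_sub_distrib]
  abel

lemma sumA_apply (x : H) :
    ∑ i, b i (cop b inv lam i (lam • x - b (inv i) x)) = aLam b inv lam x + x := by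
  calc ∑ i, b i (cop b inv lam i (lam • x - b (inv i) x))
      = (∑ i, (b i * cop b inv lam i) * (lam • (1 : H →L[ℂ] H) - b (inv i))) x := by
        simp [ContinuousLinearMap.sum_apply, ContinuousLinearMap.mul_apply,
          ContinuousLinearMap.sub_apply, ContinuousLinearMap.smul_apply,
          ContinuousLinearMap.one_apply]
    _ = (aLam b inv lam + 1) x := by rw [sumA]
    _ = aLam b inv lam x + x := rfl


/-- `λ − B` as an operator. -/
def Mop : PiLp 2 (fun _ : Fin l => H) →L[ℂ] PiLp 2 (fun _ : Fin l => H) :=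
  lam • 1 - nbOp H b inv

/-- `λ − B̃` as an operator. -/
def MopL : PiLp 2 (fun _ : Fin l => H) →L[ℂ] PiLp 2 (fun _ : Fin l => H) :=
  lam • 1 - nbOpL H b inv

lemma Mop_apply (v : PiLp 2 (fun _ : Fin l => H)) (i : Fin l) :
    Mop b inv lam v i = lam • v i - ((∑ j, b j (v j)) - b (inv i) (v (inv i))) := by
  show lam • v i - nbOp H b inv v i = _
  rw [nbOp_apply]

lemma MopL_apply (v : PiLp 2 (fun _ : Fin l => H)) (i : Fin l) :
    MopL b inv lam v i = lam • v i - ((∑ j, b i (v j)) - b i (v (inv i))) := by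
  show lam • v i - nbOpL H b inv v i = _
  rw [nbOpL_apply]

/-- candidate resolvent coordinates, right case -/
def rr (s : H) (w : PiLp 2 (fun _ : Fin l => H)) (i : Fin l) : H :=
  cop b inv lam i ((lam • s - b (inv i) s) + (lam • w i - b (inv i) (w (inv i))))

def uu (w : PiLp 2 (fun _ : Fin l => H)) : H :=
  ∑ j, b j (cop b inv lam j (lam • w j - b (inv j) (w (inv j))))

lemma key1 (hc : ∀ i, IsUnit (lam ^ 2 • (1 : H →L[ℂ] H) - b (inv i) * b i))
    (hinv : ∀ i, inv (inv i) = i) (s : H) (w : PiLp 2 (fun _ : Fin l => H)) (i : Fin l) :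
    lam • rr b inv lam s w i + b (inv i) (rr b inv lam s w (inv i)) = s + w i := by
  have hswap : b (inv i) (rr b inv lam s w (inv i))
      = cop b inv lam i (b (inv i) ((lam • s - b i s) + (lam • w (inv i) - b i (w i)))) := by
    simp only [rr, hinv]
    rw [swap_apply b inv lam hc hinv (inv i), hinv]
  rw [rr, hswap, ← map_smul, ← map_add]
  have hX : lam • ((lam • s - b (inv i) s) + (lam • w i - b (inv i) (w (inv i))))
       + b (inv i) ((lam • s - b i s) + (lam • w (inv i) - b i (w i)))
      = lam ^ 2 • (s + w i) - b (inv i) (b i (s + w i)) := by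
    simp only [map_add, map_sub, map_smul, smul_add, smul_sub, smul_smul, pow_two]
    module
  rw [hX, cop_cancel b inv lam hc]

lemma key2 (s : H) (w : PiLp 2 (fun _ : Fin l => H)) :
    ∑ j, b j (rr b inv lam s w j) = aLam b inv lam s + s + uu b inv lam w := by
  simp only [rr, uu, map_add]
  rw [Finset.sum_add_distrib, sumA_apply]

lemma key3 (hc : ∀ i, IsUnit (lam ^ 2 • (1 : H →L[ℂ] H) - b (inv i) * b i))
    (hinv : ∀ i, inv (inv i) = i) (v : PiLp 2 (fun _ : Fin l => H)) (i : Fin l) :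
    rr b inv lam (∑ j, b j (v j)) (Mop b inv lam v) i = v i := by
  simp only [rr]
  rw [Mop_apply b inv lam v i, Mop_apply b inv lam v (inv i), hinv i]
  have hX : (lam • (∑ j, b j (v j)) - b (inv i) (∑ j, b j (v j)))
      + (lam • (lam • v i - ((∑ j, b j (v j)) - b (inv i) (v (inv i))))
        - b (inv i) (lam • v (inv i) - ((∑ j, b j (v j)) - b i (v i))))
      = lam ^ 2 • v i - b (inv i) (b i (v i)) := by
    simp only [map_add, map_sub, map_smul, smul_add, smul_sub, smul_smul, pow_two]
    module
  rw [hX, cop_cancel b inv lam hc]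

lemma key4 (hc : ∀ i, IsUnit (lam ^ 2 • (1 : H →L[ℂ] H) - b (inv i) * b i))
    (hinv : ∀ i, inv (inv i) = i) (v : PiLp 2 (fun _ : Fin l => H)) :
    aLam b inv lam (∑ j, b j (v j)) = -(uu b inv lam (Mop b inv lam v)) := by
  have h3 : (∑ j, b j (v j)) = aLam b inv lam (∑ j, b j (v j)) + (∑ j, b j (v j))
      + uu b inv lam (Mop b inv lam v) := by
    conv_lhs => rw [show (∑ j, b j (v j)) = ∑ j, b j (rr b inv lam (∑ k, b k (v k))
      (Mop b inv lam v) j) from Finset.sum_congr rfl fun j _ => by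
        rw [key3 b inv lam hc hinv v j]]
    rw [key2]
  have h5 : aLam b inv lam (∑ j, b j (v j)) + uu b inv lam (Mop b inv lam v) = 0 := by
    calc aLam b inv lam (∑ j, b j (v j)) + uu b inv lam (Mop b inv lam v)
        = (aLam b inv lam (∑ j, b j (v j)) + (∑ j, b j (v j))
            + uu b inv lam (Mop b inv lam v)) - (∑ j, b j (v j)) := by abel
      _ = (∑ j, b j (v j)) - (∑ j, b j (v j)) := by rw [← h3]
      _ = 0 := sub_self _
  exact eq_neg_of_add_eq_zero_left h5


lemma pilpProj_apply (j : Fin l) (v : PiLp 2 (fun _ : Fin l => H)) :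
    pilpProj l H j v = v j := rfl

lemma pilp_zero_apply (k : Fin l) : (0 : PiLp 2 (fun _ : Fin l => H)) k = 0 := rfl

lemma isUnit_right_iff (hc : ∀ i, IsUnit (lam ^ 2 • (1 : H →L[ℂ] H) - b (inv i) * b i))
    (hinv : ∀ i, inv (inv i) = i) :
    IsUnit (Mop b inv lam) ↔ IsUnit (aLam b inv lam) := by
  constructor
  · intro hM
    obtain ⟨Mi, hM1, hM2⟩ := isUnit_iff_exists.mp hM
    have hAinj : ∀ s : H, aLam b inv lam s = 0 → s = 0 := by
      intro s hs
      set v : PiLp 2 (fun _ : Fin l => H) := pilpOfPi l H (fun i => rr b inv lam s 0 i) with hv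
      have hvi : ∀ i, v i = rr b inv lam s 0 i := fun i => rfl
      have huu0 : uu b inv lam 0 = 0 := by
        simp [uu, pilp_zero_apply]
      have hsum : ∑ j, b j (v j) = s := by
        calc ∑ j, b j (v j) = ∑ j, b j (rr b inv lam s 0 j) := by simp only [hvi]
          _ = aLam b inv lam s + s + uu b inv lam 0 := key2 b inv lam s 0
          _ = s := by rw [hs, huu0]; abel
      have hMv : Mop b inv lam v = 0 := by
        refine PiLp.ext fun i => ?_
        have h1 : lam • rr b inv lam s 0 i + b (inv i) (rr b inv lam s 0 (inv i)) = s := by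
          have := key1 b inv lam hc hinv s 0 i
          simpa [pilp_zero_apply] using this
        rw [Mop_apply, hsum, hvi i, hvi (inv i), pilp_zero_apply]
        calc lam • rr b inv lam s 0 i - (s - b (inv i) (rr b inv lam s 0 (inv i)))
            = (lam • rr b inv lam s 0 i + b (inv i) (rr b inv lam s 0 (inv i))) - s := by abel
          _ = 0 := by rw [h1, sub_self]
      have hv0 : v = 0 := by
        calc v = (1 : PiLp 2 (fun _ : Fin l => H) →L[ℂ] _) v := rfl
          _ = (Mi * Mop b inv lam) v := by rw [hM2]
          _ = Mi (Mop b inv lam v) := rfl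
          _ = 0 := by rw [hMv]; exact map_zero Mi
      have hss : s = ∑ j, b j (v j) := hsum.symm
      rw [hv0] at hss
      simpa [pilp_zero_apply] using hss
    have hAinj' : Function.Injective (aLam b inv lam) := by
      intro x y hxy
      have h0 : aLam b inv lam (x - y) = 0 := by rw [map_sub, hxy, sub_self]
      exact sub_eq_zero.mp (hAinj _ h0)
    set dg : H →L[ℂ] PiLp 2 (fun _ : Fin l => H) :=
      (pilpOfPi l H).comp (ContinuousLinearMap.pi fun _ => ContinuousLinearMap.id ℂ H) with hdg
    have hdga : ∀ (h : H) (k : Fin l), dg h k = h := fun h k => rfl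
    set T : H →L[ℂ] H := -(ContinuousLinearMap.id ℂ H +
      (∑ j, (b j).comp (pilpProj l H j)).comp (Mi.comp dg)) with hT
    have hTa : ∀ h : H, T h = -(h + ∑ j, b j ((Mi (dg h)) j)) := by
      intro h
      simp [hT, ContinuousLinearMap.sum_apply, pilpProj_apply]
    have hAT : ∀ h : H, aLam b inv lam (T h) = h := by
      intro h
      have hw : Mop b inv lam (Mi (dg h)) = dg h := by
        calc Mop b inv lam (Mi (dg h)) = ((Mop b inv lam) * Mi) (dg h) := rfl
          _ = (1 : PiLp 2 (fun _ : Fin l => H) →L[ℂ] _) (dg h) := by rw [hM1]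
          _ = dg h := rfl
      have h4 := key4 b inv lam hc hinv (Mi (dg h))
      rw [hw] at h4
      have huu : uu b inv lam (dg h) = aLam b inv lam h + h := by
        calc uu b inv lam (dg h)
            = ∑ j, b j (cop b inv lam j (lam • h - b (inv j) h)) := by
              simp only [uu, hdga]
          _ = aLam b inv lam h + h := sumA_apply b inv lam h
      rw [huu] at h4
      rw [hTa h, map_neg, map_add, h4]
      abel
    refine isUnit_iff_exists.mpr ⟨T, ?_, ?_⟩
    · refine ContinuousLinearMap.ext fun h => ?_
      rw [ContinuousLinearMap.mul_apply, ContinuousLinearMap.one_apply]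
      exact hAT h
    · refine ContinuousLinearMap.ext fun x => ?_
      rw [ContinuousLinearMap.mul_apply, ContinuousLinearMap.one_apply]
      exact hAinj' (hAT (aLam b inv lam x))
  · intro hA
    obtain ⟨Ai, hA1, hA2⟩ := isUnit_iff_exists.mp hA
    set U : PiLp 2 (fun _ : Fin l => H) →L[ℂ] H :=
      ∑ j, (b j * cop b inv lam j).comp
        (lam • pilpProj l H j - (b (inv j)).comp (pilpProj l H (inv j))) with hU
    have hUa : ∀ w, U w = uu b inv lam w := by
      intro w
      simp [hU, uu, ContinuousLinearMap.sum_apply, ContinuousLinearMap.mul_apply,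
        pilpProj_apply]
    set sOp : PiLp 2 (fun _ : Fin l => H) →L[ℂ] H := -(Ai.comp U) with hsOp
    have hsOpa : ∀ w, sOp w = -(Ai (uu b inv lam w)) := by
      intro w; simp [hsOp, hUa]
    set R : PiLp 2 (fun _ : Fin l => H) →L[ℂ] PiLp 2 (fun _ : Fin l => H) :=
      (pilpOfPi l H).comp (ContinuousLinearMap.pi fun i => (cop b inv lam i).comp
        (((lam • (1 : H →L[ℂ] H) - b (inv i)).comp sOp)
          + (lam • pilpProj l H i - (b (inv i)).comp (pilpProj l H (inv i))))) with hR
    have hRa : ∀ w i, R w i = rr b inv lam (sOp w) w i := by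
      intro w i
      show cop b inv lam i ((lam • (1 : H →L[ℂ] H) - b (inv i)) (sOp w)
        + (lam • w i - b (inv i) (w (inv i)))) = _
      simp [rr]
    have hAs : ∀ w, aLam b inv lam (sOp w) = -(uu b inv lam w) := by
      intro w
      rw [hsOpa, map_neg]
      congr 1
      calc aLam b inv lam (Ai (uu b inv lam w))
          = (aLam b inv lam * Ai) (uu b inv lam w) := rfl
        _ = (1 : H →L[ℂ] H) (uu b inv lam w) := by rw [hA1]
        _ = uu b inv lam w := rfl
    refine isUnit_iff_exists.mpr ⟨R, ?_, ?_⟩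
    · refine ContinuousLinearMap.ext fun w => ?_
      refine PiLp.ext fun i => ?_
      rw [ContinuousLinearMap.mul_apply, ContinuousLinearMap.one_apply]
      have hsum : ∑ j, b j (R w j) = sOp w := by
        calc ∑ j, b j (R w j)
            = ∑ j, b j (rr b inv lam (sOp w) w j) :=
              Finset.sum_congr rfl fun j _ => by rw [hRa w j]
          _ = aLam b inv lam (sOp w) + sOp w + uu b inv lam w := key2 b inv lam (sOp w) w
          _ = sOp w := by rw [hAs]; abel
      rw [Mop_apply, hsum, hRa w i, hRa w (inv i)]
      have h1 := key1 b inv lam hc hinv (sOp w) w i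
      calc lam • rr b inv lam (sOp w) w i
            - (sOp w - b (inv i) (rr b inv lam (sOp w) w (inv i)))
          = (lam • rr b inv lam (sOp w) w i
            + b (inv i) (rr b inv lam (sOp w) w (inv i))) - sOp w := by abel
        _ = (sOp w + w i) - sOp w := by rw [h1]
        _ = w i := by abel
    · refine ContinuousLinearMap.ext fun v => ?_
      refine PiLp.ext fun i => ?_
      rw [ContinuousLinearMap.mul_apply, ContinuousLinearMap.one_apply]
      have hs : sOp (Mop b inv lam v) = ∑ j, b j (v j) := by
        have h4 := key4 b inv lam hc hinv v
        have h4' : uu b inv lam (Mop b inv lam v) = -(aLam b inv lam (∑ j, b j (v j))) := by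
          rw [h4, neg_neg]
        calc sOp (Mop b inv lam v) = -(Ai (uu b inv lam (Mop b inv lam v))) := hsOpa _
          _ = -(Ai (-(aLam b inv lam (∑ j, b j (v j))))) := by rw [h4']
          _ = Ai (aLam b inv lam (∑ j, b j (v j))) := by rw [map_neg, neg_neg]
          _ = (Ai * aLam b inv lam) (∑ j, b j (v j)) := rfl
          _ = (1 : H →L[ℂ] H) (∑ j, b j (v j)) := by rw [hA2]
          _ = ∑ j, b j (v j) := rfl
      rw [hRa, hs, key3 b inv lam hc hinv v i]


/-- candidate resolvent coordinates, left case -/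
def rrL (s : H) (w : PiLp 2 (fun _ : Fin l => H)) (i : Fin l) : H :=
  cop b inv lam (inv i) (b i (lam • s - b (inv i) s) + (lam • w i - b i (w (inv i))))

def uuL (w : PiLp 2 (fun _ : Fin l => H)) : H :=
  ∑ j, cop b inv lam (inv j) (lam • w j - b j (w (inv j)))

lemma cop_cancelL (hc : ∀ i, IsUnit (lam ^ 2 • (1 : H →L[ℂ] H) - b (inv i) * b i))
    (hinv : ∀ i, inv (inv i) = i) (i : Fin l) (x : H) :
    cop b inv lam (inv i) (lam ^ 2 • x - b i (b (inv i) x)) = x := by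
  have h := cop_cancel b inv lam hc (inv i) x
  rwa [hinv] at h

lemma keyL1 (hc : ∀ i, IsUnit (lam ^ 2 • (1 : H →L[ℂ] H) - b (inv i) * b i))
    (hinv : ∀ i, inv (inv i) = i) (s : H) (w : PiLp 2 (fun _ : Fin l => H)) (i : Fin l) :
    lam • rrL b inv lam s w i + b i (rrL b inv lam s w (inv i)) = b i s + w i := by
  have hswap : b i (rrL b inv lam s w (inv i))
      = cop b inv lam (inv i) (b i (b (inv i) (lam • s - b i s)
        + (lam • w (inv i) - b (inv i) (w i)))) := by
    simp only [rrL, hinv]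
    rw [swap_apply b inv lam hc hinv i]
  rw [rrL, hswap, ← map_smul, ← map_add]
  have hX : lam • (b i (lam • s - b (inv i) s) + (lam • w i - b i (w (inv i))))
      + b i (b (inv i) (lam • s - b i s) + (lam • w (inv i) - b (inv i) (w i)))
      = (lam ^ 2 • (b i s) - b i (b (inv i) (b i s)))
        + (lam ^ 2 • (w i) - b i (b (inv i) (w i))) := by
    simp only [map_add, map_sub, map_smul, smul_add, smul_sub, smul_smul, pow_two]
    module
  rw [hX, map_add, cop_cancelL b inv lam hc hinv i (b i s), cop_cancelL b inv lam hc hinv i (w i)]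

lemma keyL2 (hc : ∀ i, IsUnit (lam ^ 2 • (1 : H →L[ℂ] H) - b (inv i) * b i))
    (hinv : ∀ i, inv (inv i) = i) (s : H) (w : PiLp 2 (fun _ : Fin l => H)) :
    ∑ j, rrL b inv lam s w j = aLam b inv lam s + s + uuL b inv lam w := by
  simp only [rrL, uuL, map_add]
  rw [Finset.sum_add_distrib]
  congr 1
  calc ∑ j, cop b inv lam (inv j) (b j (lam • s - b (inv j) s))
      = ∑ j, b j (cop b inv lam j (lam • s - b (inv j) s)) :=
        Finset.sum_congr rfl fun j _ => (swap_apply b inv lam hc hinv j _).symm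
    _ = aLam b inv lam s + s := sumA_apply b inv lam s

lemma keyL3 (hc : ∀ i, IsUnit (lam ^ 2 • (1 : H →L[ℂ] H) - b (inv i) * b i))
    (hinv : ∀ i, inv (inv i) = i) (v : PiLp 2 (fun _ : Fin l => H)) (i : Fin l) :
    rrL b inv lam (∑ j, v j) (MopL b inv lam v) i = v i := by
  simp only [rrL]
  rw [MopL_apply b inv lam v i, MopL_apply b inv lam v (inv i), hinv i]
  have hX : b i (lam • (∑ j, v j) - b (inv i) (∑ j, v j))
      + (lam • (lam • v i - ((∑ j, b i (v j)) - b i (v (inv i))))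
        - b i (lam • v (inv i) - ((∑ j, b (inv i) (v j)) - b (inv i) (v i))))
      = lam ^ 2 • v i - b i (b (inv i) (v i)) := by
    simp only [map_add, map_sub, map_smul, map_sum, smul_add, smul_sub, smul_smul,
      pow_two, Finset.smul_sum]
    module
  rw [hX, cop_cancelL b inv lam hc hinv i (v i)]

lemma keyL4 (hc : ∀ i, IsUnit (lam ^ 2 • (1 : H →L[ℂ] H) - b (inv i) * b i))
    (hinv : ∀ i, inv (inv i) = i) (v : PiLp 2 (fun _ : Fin l => H)) :
    aLam b inv lam (∑ j, v j) = -(uuL b inv lam (MopL b inv lam v)) := by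
  have h3 : (∑ j, v j) = aLam b inv lam (∑ j, v j) + (∑ j, v j)
      + uuL b inv lam (MopL b inv lam v) := by
    conv_lhs => rw [show (∑ j, v j) = ∑ j, rrL b inv lam (∑ k, v k)
      (MopL b inv lam v) j from Finset.sum_congr rfl fun j _ => by
        rw [keyL3 b inv lam hc hinv v j]]
    rw [keyL2 b inv lam hc hinv]
  have h5 : aLam b inv lam (∑ j, v j) + uuL b inv lam (MopL b inv lam v) = 0 := by
    calc aLam b inv lam (∑ j, v j) + uuL b inv lam (MopL b inv lam v)
        = (aLam b inv lam (∑ j, v j) + (∑ j, v j)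
            + uuL b inv lam (MopL b inv lam v)) - (∑ j, v j) := by abel
      _ = (∑ j, v j) - (∑ j, v j) := by rw [← h3]
      _ = 0 := sub_self _
  exact eq_neg_of_add_eq_zero_left h5

lemma isUnit_left_iff (hc : ∀ i, IsUnit (lam ^ 2 • (1 : H →L[ℂ] H) - b (inv i) * b i))
    (hinv : ∀ i, inv (inv i) = i) :
    IsUnit (MopL b inv lam) ↔ IsUnit (aLam b inv lam) := by
  constructor
  · intro hM
    obtain ⟨Mi, hM1, hM2⟩ := isUnit_iff_exists.mp hM
    have hAinj : ∀ s : H, aLam b inv lam s = 0 → s = 0 := by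
      intro s hs
      set v : PiLp 2 (fun _ : Fin l => H) := pilpOfPi l H (fun i => rrL b inv lam s 0 i) with hv
      have hvi : ∀ i, v i = rrL b inv lam s 0 i := fun i => rfl
      have huu0 : uuL b inv lam 0 = 0 := by
        simp [uuL, pilp_zero_apply]
      have hsum : ∑ j, v j = s := by
        calc ∑ j, v j = ∑ j, rrL b inv lam s 0 j := by simp only [hvi]
          _ = aLam b inv lam s + s + uuL b inv lam 0 := keyL2 b inv lam hc hinv s 0
          _ = s := by rw [hs, huu0]; abel
      have hMv : MopL b inv lam v = 0 := by
        refine PiLp.ext fun i => ?_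
        have h1 : lam • rrL b inv lam s 0 i + b i (rrL b inv lam s 0 (inv i)) = b i s := by
          have := keyL1 b inv lam hc hinv s 0 i
          simpa [pilp_zero_apply] using this
        have hbs : ∑ j, b i (v j) = b i s := by rw [← map_sum, hsum]
        rw [MopL_apply, hbs, hvi i, hvi (inv i), pilp_zero_apply]
        calc lam • rrL b inv lam s 0 i - (b i s - b i (rrL b inv lam s 0 (inv i)))
            = (lam • rrL b inv lam s 0 i + b i (rrL b inv lam s 0 (inv i))) - b i s := by abel
          _ = 0 := by rw [h1, sub_self]
      have hv0 : v = 0 := by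
        calc v = (1 : PiLp 2 (fun _ : Fin l => H) →L[ℂ] _) v := rfl
          _ = (Mi * MopL b inv lam) v := by rw [hM2]
          _ = Mi (MopL b inv lam v) := rfl
          _ = 0 := by rw [hMv]; exact map_zero Mi
      have hss : s = ∑ j, v j := hsum.symm
      rw [hv0] at hss
      simpa [pilp_zero_apply] using hss
    have hAinj' : Function.Injective (aLam b inv lam) := by
      intro x y hxy
      have h0 : aLam b inv lam (x - y) = 0 := by rw [map_sub, hxy, sub_self]
      exact sub_eq_zero.mp (hAinj _ h0)
    set dgb : H →L[ℂ] PiLp 2 (fun _ : Fin l => H) :=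
      (pilpOfPi l H).comp (ContinuousLinearMap.pi fun i => b i) with hdgb
    have hdgba : ∀ (h : H) (k : Fin l), dgb h k = b k h := fun h k => rfl
    set T : H →L[ℂ] H := -(ContinuousLinearMap.id ℂ H +
      (∑ j, pilpProj l H j).comp (Mi.comp dgb)) with hT
    have hTa : ∀ h : H, T h = -(h + ∑ j, (Mi (dgb h)) j) := by
      intro h
      simp [hT, ContinuousLinearMap.sum_apply, pilpProj_apply]
    have hAT : ∀ h : H, aLam b inv lam (T h) = h := by
      intro h
      have hw : MopL b inv lam (Mi (dgb h)) = dgb h := by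
        calc MopL b inv lam (Mi (dgb h)) = ((MopL b inv lam) * Mi) (dgb h) := rfl
          _ = (1 : PiLp 2 (fun _ : Fin l => H) →L[ℂ] _) (dgb h) := by rw [hM1]
          _ = dgb h := rfl
      have h4 := keyL4 b inv lam hc hinv (Mi (dgb h))
      rw [hw] at h4
      have huu : uuL b inv lam (dgb h) = aLam b inv lam h + h := by
        calc uuL b inv lam (dgb h)
            = ∑ j, cop b inv lam (inv j) (lam • (b j h) - b j (b (inv j) h)) := by
              simp only [uuL, hdgba]
          _ = ∑ j, cop b inv lam (inv j) (b j (lam • h - b (inv j) h)) :=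
              Finset.sum_congr rfl fun j _ => by congr 1; simp
          _ = ∑ j, b j (cop b inv lam j (lam • h - b (inv j) h)) :=
              Finset.sum_congr rfl fun j _ => (swap_apply b inv lam hc hinv j _).symm
          _ = aLam b inv lam h + h := sumA_apply b inv lam h
      rw [huu] at h4
      rw [hTa h, map_neg, map_add, h4]
      abel
    refine isUnit_iff_exists.mpr ⟨T, ?_, ?_⟩
    · refine ContinuousLinearMap.ext fun h => ?_
      rw [ContinuousLinearMap.mul_apply, ContinuousLinearMap.one_apply]
      exact hAT h
    · refine ContinuousLinearMap.ext fun x => ?_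
      rw [ContinuousLinearMap.mul_apply, ContinuousLinearMap.one_apply]
      exact hAinj' (hAT (aLam b inv lam x))
  · intro hA
    obtain ⟨Ai, hA1, hA2⟩ := isUnit_iff_exists.mp hA
    set U : PiLp 2 (fun _ : Fin l => H) →L[ℂ] H :=
      ∑ j, (cop b inv lam (inv j)).comp
        (lam • pilpProj l H j - (b j).comp (pilpProj l H (inv j))) with hU
    have hUa : ∀ w, U w = uuL b inv lam w := by
      intro w
      simp [hU, uuL, ContinuousLinearMap.sum_apply, pilpProj_apply]
    set sOp : PiLp 2 (fun _ : Fin l => H) →L[ℂ] H := -(Ai.comp U) with hsOp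
    have hsOpa : ∀ w, sOp w = -(Ai (uuL b inv lam w)) := by
      intro w; simp [hsOp, hUa]
    set R : PiLp 2 (fun _ : Fin l => H) →L[ℂ] PiLp 2 (fun _ : Fin l => H) :=
      (pilpOfPi l H).comp (ContinuousLinearMap.pi fun i => (cop b inv lam (inv i)).comp
        (((b i).comp ((lam • (1 : H →L[ℂ] H) - b (inv i)).comp sOp))
          + (lam • pilpProj l H i - (b i).comp (pilpProj l H (inv i))))) with hR
    have hRa : ∀ w i, R w i = rrL b inv lam (sOp w) w i := by
      intro w i
      show cop b inv lam (inv i) (b i ((lam • (1 : H →L[ℂ] H) - b (inv i)) (sOp w))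
        + (lam • w i - b i (w (inv i)))) = _
      simp [rrL]
    have hAs : ∀ w, aLam b inv lam (sOp w) = -(uuL b inv lam w) := by
      intro w
      rw [hsOpa, map_neg]
      congr 1
      calc aLam b inv lam (Ai (uuL b inv lam w))
          = (aLam b inv lam * Ai) (uuL b inv lam w) := rfl
        _ = (1 : H →L[ℂ] H) (uuL b inv lam w) := by rw [hA1]
        _ = uuL b inv lam w := rfl
    refine isUnit_iff_exists.mpr ⟨R, ?_, ?_⟩
    · refine ContinuousLinearMap.ext fun w => ?_
      refine PiLp.ext fun i => ?_
      rw [ContinuousLinearMap.mul_apply, ContinuousLinearMap.one_apply]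
      have hsum : ∑ j, R w j = sOp w := by
        calc ∑ j, R w j
            = ∑ j, rrL b inv lam (sOp w) w j :=
              Finset.sum_congr rfl fun j _ => by rw [hRa w j]
          _ = aLam b inv lam (sOp w) + sOp w + uuL b inv lam w := keyL2 b inv lam hc hinv (sOp w) w
          _ = sOp w := by rw [hAs]; abel
      have hbs : ∑ j, b i (R w j) = b i (sOp w) := by rw [← map_sum, hsum]
      rw [MopL_apply, hbs, hRa w i, hRa w (inv i)]
      have h1 := keyL1 b inv lam hc hinv (sOp w) w i
      calc lam • rrL b inv lam (sOp w) w i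
            - (b i (sOp w) - b i (rrL b inv lam (sOp w) w (inv i)))
          = (lam • rrL b inv lam (sOp w) w i
            + b i (rrL b inv lam (sOp w) w (inv i))) - b i (sOp w) := by abel
        _ = (b i (sOp w) + w i) - b i (sOp w) := by rw [h1]
        _ = w i := by abel
    · refine ContinuousLinearMap.ext fun v => ?_
      refine PiLp.ext fun i => ?_
      rw [ContinuousLinearMap.mul_apply, ContinuousLinearMap.one_apply]
      have hs : sOp (MopL b inv lam v) = ∑ j, v j := by
        have h4 := keyL4 b inv lam hc hinv v
        have h4' : uuL b inv lam (MopL b inv lam v) = -(aLam b inv lam (∑ j, v j)) := by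
          rw [h4, neg_neg]
        calc sOp (MopL b inv lam v) = -(Ai (uuL b inv lam (MopL b inv lam v))) := hsOpa _
          _ = -(Ai (-(aLam b inv lam (∑ j, v j)))) := by rw [h4']
          _ = Ai (aLam b inv lam (∑ j, v j)) := by rw [map_neg, neg_neg]
          _ = (Ai * aLam b inv lam) (∑ j, v j) := rfl
          _ = (1 : H →L[ℂ] H) (∑ j, v j) := by rw [hA2]
          _ = ∑ j, v j := rfl
      rw [hRa, hs, keyL3 b inv lam hc hinv v i]

end Aux

/-- **Proposition (spectral mapping for non-backtracking operators).** Let `b_1, …, b_ℓ` be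
bounded operators on a Hilbert space `H`, `i ↦ i*` an involution of `[ℓ]`, and `λ ∈ ℂ` with
`λ² ∉ σ(b_{i*} b_i)` for all `i`. Then `λ ∈ σ(B)` iff `0 ∈ σ(A^{(λ)})`, and likewise
`λ ∈ σ(B̃)` iff `0 ∈ σ(A^{(λ)})`. -/
theorem statement16 [CompleteSpace H] {l : ℕ}
    (b : Fin l → H →L[ℂ] H) (inv : Fin l → Fin l) (hinv : ∀ i, inv (inv i) = i)
    (lam : ℂ)
    (hlam : ∀ i, lam ^ 2 ∉ spectrum ℂ (b (inv i) * b i)) :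
    (lam ∈ spectrum ℂ (nbOp H b inv) ↔ (0 : ℂ) ∈ spectrum ℂ (aLam b inv lam)) ∧
    (lam ∈ spectrum ℂ (nbOpL H b inv) ↔ (0 : ℂ) ∈ spectrum ℂ (aLam b inv lam)) := by
  have hc : ∀ i, IsUnit (lam ^ 2 • (1 : H →L[ℂ] H) - b (inv i) * b i) := by
    intro i
    have h := spectrum.notMem_iff.mp (hlam i)
    rwa [Algebra.algebraMap_eq_smul_one] at h
  have h0 : ((0 : ℂ) ∈ spectrum ℂ (aLam b inv lam)) ↔ ¬ IsUnit (aLam b inv lam) := by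
    rw [spectrum.mem_iff, map_zero, zero_sub, IsUnit.neg_iff]
  constructor
  · rw [spectrum.mem_iff, h0, Algebra.algebraMap_eq_smul_one]
    exact not_congr (isUnit_right_iff b inv lam hc hinv)
  · rw [spectrum.mem_iff, h0, Algebra.algebraMap_eq_smul_one]
    exact not_congr (isUnit_left_iff b inv lam hc hinv)

end SAF
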